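/- Let Σ be a finite alphabet of size m ≥ 1 and let L ⊆ Σ* be a nonempty finite language, with l = max_{x∈L}|x| the length of a longest string in L. Then there exists a 1QFAC over Σ with l + 2 classical states and m^l quantum basis states that recognizes L exactly, i.e., its acceptance probability is 1 on every w ∈ L and 0 on every w ∉ L. -/

import Mathlib

noncomputable section

/-- The `n`-dimensional complex Hilbert space `ℂⁿ`. -/
abbrev QState (n : ℕ) := EuclideanSpace ℂ (Fin n)

/-- Apply a matrix to a vector of `ℂⁿ`. -/
def mApply {n : ℕ} (M : Matrix (Fin n) (Fin n) ℂ) (v : QState n) : QState n :=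
  Matrix.toEuclideanLin M v

/-- A 1QFAC: classical states `S` with initial state and transitions, an `n`-dimensional
quantum part with a unit initial vector, a unitary for each (classical state, letter),
and an orthogonal projection (accepting measurement) for each classical state. -/
structure QFAC (Alph : Type) (S : Type) (n : ℕ) where
  s0 : S
  tr : S → Alph → S
  ψ0 : QState n
  ψ0_unit : ‖ψ0‖ = 1
  U : S → Alph → Matrix (Fin n) (Fin n) ℂ
  U_unitary : ∀ s σ, U s σ ∈ Matrix.unitaryGroup (Fin n) ℂ
  P : S → Matrix (Fin n) (Fin n) ℂ
  P_proj : ∀ s, (P s).conjTranspose = P s ∧ P s * P s = P s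

namespace QFAC
variable {Alph S : Type} {n : ℕ}

/-- `s_x`: the classical state reached after reading `x`. -/
def sState (A : QFAC Alph S n) (x : List Alph) : S := x.foldl A.tr A.s0

/-- `|ψ_x⟩`: the final quantum state after reading `x`. -/
def qState (A : QFAC Alph S n) (x : List Alph) : QState n :=
  (x.foldl (fun p σ => (A.tr p.1 σ, mApply (A.U p.1 σ) p.2)) (A.s0, A.ψ0)).2

/-- Acceptance probability `‖P_{s_x,acc}|ψ_x⟩‖²`. -/
def probAcc (A : QFAC Alph S n) (x : List Alph) : ℝ :=
  ‖mApply (A.P (A.sState x)) (A.qState x)‖ ^ 2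

/-- Recognition with cut-point `lam` isolated by `ε`. -/
def Recognizes (A : QFAC Alph S n) (L : Set (List Alph)) (lam ε : ℝ) : Prop :=
  (∀ x ∈ L, lam + ε ≤ A.probAcc x) ∧ (∀ x ∉ L, A.probAcc x ≤ lam - ε)

end QFAC

/-! ### Auxiliary constructions -/

section Aux

open Classical

lemma permMatrix_mem_unitaryGroup {n : ℕ} (σ : Equiv.Perm (Fin n)) :
    σ.permMatrix ℂ ∈ Matrix.unitaryGroup (Fin n) ℂ := by
  rw [Matrix.mem_unitaryGroup_iff]
  have hstar : star (σ.permMatrix ℂ) = σ⁻¹.permMatrix ℂ := by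
    have h2 : (σ.permMatrix ℂ).conjTranspose = (σ.permMatrix ℂ).transpose := by
      ext i j
      simp only [Matrix.conjTranspose_apply, Matrix.transpose_apply, Equiv.Perm.permMatrix,
        PEquiv.toMatrix_apply]
      split <;> simp
    show (σ.permMatrix ℂ).conjTranspose = _
    rw [h2, ← PEquiv.toMatrix_symm, ← Equiv.toPEquiv_symm]
    rfl
  rw [hstar]
  show σ.toPEquiv.toMatrix * (σ⁻¹).toPEquiv.toMatrix = 1
  rw [← PEquiv.toMatrix_trans, ← Equiv.toPEquiv_trans]
  have h3 : σ.trans σ⁻¹ = Equiv.refl _ := by ext x; simp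
  rw [h3, Equiv.toPEquiv_refl, PEquiv.toMatrix_refl]

lemma mApply_apply {n : ℕ} (M : Matrix (Fin n) (Fin n) ℂ) (v : QState n) (i : Fin n) :
    mApply M v i = M.mulVec v i := by
  simp only [mApply, Matrix.toEuclideanLin_apply]

lemma mApply_permMatrix_single {n : ℕ} (σ : Equiv.Perm (Fin n)) (j : Fin n) :
    mApply (σ.permMatrix ℂ) (EuclideanSpace.single j 1) = EuclideanSpace.single (σ⁻¹ j) 1 := by
  ext i
  rw [mApply_apply]
  have : (σ.permMatrix ℂ).mulVec (EuclideanSpace.single j 1) i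
      = (EuclideanSpace.single j (1:ℂ)) (σ i) := by
    simp only [Matrix.mulVec, dotProduct, Equiv.Perm.permMatrix, PEquiv.toMatrix_apply,
      Equiv.toPEquiv_apply, Option.mem_def, Option.some.injEq]
    rw [Finset.sum_eq_single (σ i)]
    · simp
    · intro b _ hb; simp [Ne.symm hb]
    · simp
  rw [this]
  simp only [EuclideanSpace.single_apply]
  by_cases h : σ i = j
  · rw [if_pos h, if_pos (by rw [← h]; simp)]
  · have h2 : i ≠ σ⁻¹ j := by
      intro hi; apply h; rw [hi]; simp
    rw [if_neg h, if_neg h2]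

lemma mApply_diagonal {n : ℕ} (d : Fin n → ℂ) (v : QState n) (i : Fin n) :
    mApply (Matrix.diagonal d) v i = d i * v i := by
  rw [mApply_apply, Matrix.mulVec_diagonal]

variable {Alph : Type} [Fintype Alph]

/-- The permutation of `Fin l → Alph` that swaps `a0 ↦ σ` at coordinate `k`. -/
def flipPerm (a0 : Alph) {l : ℕ} (k : Fin l) (σ : Alph) : Equiv.Perm (Fin l → Alph) where
  toFun f := Function.update f k (Equiv.swap a0 σ (f k))
  invFun f := Function.update f k (Equiv.swap a0 σ (f k))
  left_inv f := by
    simp [Function.update_self, Function.update_idem]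
  right_inv f := by
    simp [Function.update_self, Function.update_idem]

/-- Encode a string of length `≤ l` as a function `Fin l → Alph`, padding with `a0`. -/
def encStr (a0 : Alph) (l : ℕ) (x : List Alph) : Fin l → Alph := fun i => x.getD i a0

lemma encStr_append (a0 : Alph) {l : ℕ} (x : List Alph) (σ : Alph) (h : x.length < l) :
    encStr a0 l (x ++ [σ]) = flipPerm a0 ⟨x.length, h⟩ σ (encStr a0 l x) := by
  funext i
  simp only [flipPerm, Equiv.coe_fn_mk, encStr]
  rcases eq_or_ne i (⟨x.length, h⟩ : Fin l) with hik | hik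
  · subst hik
    rw [Function.update_self]
    have h1 : x.getD x.length a0 = a0 := List.getD_eq_default _ _ le_rfl
    have h2 : (x ++ [σ]).getD x.length a0 = σ := by
      rw [List.getD_eq_getElem _ _ (by simp)]
      simp
    rw [h1, h2, Equiv.swap_apply_left]
  · rw [Function.update_of_ne hik]
    show (x ++ [σ]).getD i a0 = x.getD i a0
    rcases lt_or_ge (i : ℕ) x.length with hi | hi
    · rw [List.getD_eq_getElem _ _ (by simp; omega), List.getD_eq_getElem _ _ hi]
      exact List.getElem_append_left hi
    · have hi' : x.length < (i : ℕ) := by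
        rcases lt_or_eq_of_le hi with h' | h'
        · exact h'
        · exact absurd (Fin.ext h'.symm) hik
      rw [List.getD_eq_default _ _ (by simp; omega), List.getD_eq_default _ _ (by omega)]

lemma encStr_inj (a0 : Alph) {l : ℕ} {u w : List Alph} (hu : u.length ≤ l) (hw : w.length ≤ l)
    (hlen : u.length = w.length) (h : encStr a0 l u = encStr a0 l w) : u = w := by
  apply List.ext_getElem hlen
  intro i h1 h2
  have hil : i < l := lt_of_lt_of_le h1 hu
  have := congrFun h ⟨i, hil⟩
  simpa only [encStr, List.getD_eq_getElem u a0 h1, List.getD_eq_getElem w a0 h2] using this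

variable (L : Set (List Alph)) (l : ℕ) (a0 : Alph)
  (e : (Fin l → Alph) ≃ Fin (Fintype.card Alph ^ l))

/-- The 1QFAC recognizing the finite language `L` exactly. -/
def theA : QFAC Alph (Fin (l + 2)) (Fintype.card Alph ^ l) where
  s0 := ⟨0, by omega⟩
  tr s _ := ⟨min (s + 1) (l + 1), by omega⟩
  ψ0 := EuclideanSpace.single (e (encStr a0 l [])) 1
  ψ0_unit := by rw [EuclideanSpace.norm_single]; simp
  U s σ := if h : (s : ℕ) < l
    then ((e.permCongr (flipPerm a0 ⟨s, h⟩ σ))⁻¹).permMatrix ℂ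
    else 1
  U_unitary s σ := by
    split
    · exact permMatrix_mem_unitaryGroup _
    · exact Submonoid.one_mem _
  P s := Matrix.diagonal fun i =>
    if ∃ u ∈ L, u.length = (s : ℕ) ∧ e (encStr a0 l u) = i then 1 else 0
  P_proj s := by
    constructor
    · rw [Matrix.diagonal_conjTranspose]
      have hst : star (fun i => if ∃ u ∈ L, u.length = (s : ℕ) ∧ e (encStr a0 l u) = i
            then (1:ℂ) else 0)
          = fun i => if ∃ u ∈ L, u.length = (s : ℕ) ∧ e (encStr a0 l u) = i then 1 else 0 := by
        funext i
        simp only [Pi.star_apply]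
        split <;> simp
      rw [hst]
    · rw [Matrix.diagonal_mul_diagonal]
      have hsq : (fun i => (if ∃ u ∈ L, u.length = (s : ℕ) ∧ e (encStr a0 l u) = i
              then (1:ℂ) else 0) *
            if ∃ u ∈ L, u.length = (s : ℕ) ∧ e (encStr a0 l u) = i then 1 else 0)
          = fun i => if ∃ u ∈ L, u.length = (s : ℕ) ∧ e (encStr a0 l u) = i then 1 else 0 := by
        funext i
        split <;> simp
      rw [hsq]

lemma theA_sState_coe (x : List Alph) :
    ((theA L l a0 e).sState x : ℕ) = min x.length (l + 1) := by
  suffices h : ∀ (x : List Alph) (s : Fin (l + 2)),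
      ((x.foldl (theA L l a0 e).tr s : Fin (l+2)) : ℕ) = min ((s : ℕ) + x.length) (l + 1) by
    have := h x (theA L l a0 e).s0
    simpa [QFAC.sState, theA] using this
  intro x
  induction x with
  | nil => intro s; simp only [List.foldl_nil, List.length_nil, Nat.add_zero]
           have := s.isLt; omega
  | cons σ x ih =>
    intro s
    rw [List.foldl_cons, ih]
    show min (((⟨min (s + 1) (l + 1), _⟩ : Fin (l+2)) : ℕ) + x.length) (l + 1) = _
    simp only [List.length_cons]
    omega

lemma theA_fold_fst (x : List Alph) (p : Fin (l + 2) × QState (Fintype.card Alph ^ l)) :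
    (x.foldl (fun p σ => ((theA L l a0 e).tr p.1 σ,
      mApply ((theA L l a0 e).U p.1 σ) p.2)) p).1 = x.foldl (theA L l a0 e).tr p.1 := by
  induction x generalizing p with
  | nil => rfl
  | cons σ x ih => rw [List.foldl_cons, List.foldl_cons, ih]

lemma theA_qState (x : List Alph) (hx : x.length ≤ l) :
    (theA L l a0 e).qState x = EuclideanSpace.single (e (encStr a0 l x)) 1 := by
  induction x using List.reverseRecOn with
  | nil => rfl
  | append_singleton x σ ih =>
    have hxl : x.length < l := by simpa using hx
    have hih := ih (le_of_lt hxl)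
    rw [QFAC.qState, List.foldl_append, List.foldl_cons, List.foldl_nil]
    rw [theA_fold_fst]
    have hfst : (x.foldl (theA L l a0 e).tr (theA L l a0 e).s0) = (theA L l a0 e).sState x := rfl
    have hsnd : (x.foldl (fun p σ => ((theA L l a0 e).tr p.1 σ,
        mApply ((theA L l a0 e).U p.1 σ) p.2)) ((theA L l a0 e).s0, (theA L l a0 e).ψ0)).2
        = (theA L l a0 e).qState x := rfl
    rw [hfst, hsnd, hih]
    have hs : ((theA L l a0 e).sState x : ℕ) = x.length := by
      rw [theA_sState_coe]; omega
    have hsl : (((theA L l a0 e).sState x) : ℕ) < l := by omega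
    have hU : (theA L l a0 e).U ((theA L l a0 e).sState x) σ
        = ((e.permCongr (flipPerm a0 ⟨x.length, hxl⟩ σ))⁻¹).permMatrix ℂ := by
      show (if h : (((theA L l a0 e).sState x) : ℕ) < l then
          ((e.permCongr (flipPerm a0 ⟨((theA L l a0 e).sState x : ℕ), h⟩ σ))⁻¹).permMatrix ℂ
        else 1) = _
      rw [dif_pos hsl]
      have hfin : (⟨((theA L l a0 e).sState x : ℕ), hsl⟩ : Fin l) = ⟨x.length, hxl⟩ :=
        Fin.ext hs
      rw [hfin]
    rw [hU, mApply_permMatrix_single, inv_inv]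
    rw [Equiv.permCongr_apply, Equiv.symm_apply_apply, encStr_append a0 x σ hxl]

end Aux

/-- For a nonempty finite language `L` over an alphabet of size `m ≥ 1`
with longest-string length `l`, there is a 1QFAC with `l + 2` classical states and `m^l`
quantum basis states recognizing `L` exactly (probability 1 on `L`, 0 off `L`). -/
theorem stmt_9 {Alph : Type} [Fintype Alph] (hm : 1 ≤ Fintype.card Alph)
    (L : Set (List Alph)) (hLfin : L.Finite) (hLne : L.Nonempty)
    (l : ℕ) (hl : ∀ x ∈ L, x.length ≤ l) (hl' : ∃ x ∈ L, x.length = l) :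
    ∃ A : QFAC Alph (Fin (l + 2)) (Fintype.card Alph ^ l),
      (∀ w ∈ L, A.probAcc w = 1) ∧ (∀ w ∉ L, A.probAcc w = 0) := by
  classical
  have hne : Nonempty Alph := Fintype.card_pos_iff.mp hm
  let a0 : Alph := Classical.arbitrary Alph
  have hcard : Fintype.card (Fin l → Alph) = Fintype.card Alph ^ l := by
    rw [Fintype.card_fun, Fintype.card_fin]
  let e : (Fin l → Alph) ≃ Fin (Fintype.card Alph ^ l) := Fintype.equivFinOfCardEq hcard
  set A := theA L l a0 e with hA
  have hP : ∀ s : Fin (l + 2), A.P s = Matrix.diagonal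
      (fun i => if ∃ u ∈ L, u.length = (s : ℕ) ∧ e (encStr a0 l u) = i then 1 else 0) :=
    fun s => rfl
  refine ⟨A, ?_, ?_⟩
  · intro w hw
    have hwl : w.length ≤ l := hl w hw
    have hs : ((A.sState w : Fin (l+2)) : ℕ) = w.length := by
      rw [hA, theA_sState_coe]; omega
    have hq : A.qState w = EuclideanSpace.single (e (encStr a0 l w)) 1 :=
      theA_qState L l a0 e w hwl
    have hacc : ∃ u ∈ L, u.length = ((A.sState w : Fin (l+2)) : ℕ)
        ∧ e (encStr a0 l u) = e (encStr a0 l w) := ⟨w, hw, hs.symm, rfl⟩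
    have hMP : mApply (A.P (A.sState w)) (A.qState w)
        = EuclideanSpace.single (e (encStr a0 l w)) 1 := by
      rw [hq, hP]
      ext i
      rw [mApply_diagonal]
      simp only [EuclideanSpace.single_apply]
      by_cases hij : i = e (encStr a0 l w)
      · rw [if_pos hij, mul_one, if_pos (hij ▸ hacc)]
      · rw [if_neg hij, mul_zero]
    rw [QFAC.probAcc, hMP, EuclideanSpace.norm_single]
    simp
  · intro w hw
    rcases le_or_gt w.length l with hwl | hwl
    · have hs : ((A.sState w : Fin (l+2)) : ℕ) = w.length := by
        rw [hA, theA_sState_coe]; omega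
      have hq : A.qState w = EuclideanSpace.single (e (encStr a0 l w)) 1 :=
        theA_qState L l a0 e w hwl
      have hMP : mApply (A.P (A.sState w)) (A.qState w) = 0 := by
        rw [hq, hP]
        ext i
        rw [mApply_diagonal]
        simp only [EuclideanSpace.single_apply]
        by_cases hij : i = e (encStr a0 l w)
        · rw [if_pos hij, mul_one]
          have : ¬ ∃ u ∈ L, u.length = ((A.sState w : Fin (l+2)) : ℕ)
              ∧ e (encStr a0 l u) = i := by
            rintro ⟨u, huL, hulen, hue⟩
            apply hw
            have hul : u.length ≤ l := hl u huL
            have henc : encStr a0 l u = encStr a0 l w := by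
              apply e.injective
              rw [hue, hij]
            have : u = w := encStr_inj a0 hul hwl (by omega) henc
            rwa [this] at huL
          rw [if_neg this]
          rfl
        · rw [if_neg hij, mul_zero]
          rfl
      rw [QFAC.probAcc, hMP, norm_zero]
      simp
    · have hs : ((A.sState w : Fin (l+2)) : ℕ) = l + 1 := by
        rw [hA, theA_sState_coe]; omega
      have hMP : mApply (A.P (A.sState w)) (A.qState w) = 0 := by
        rw [hP]
        ext i
        rw [mApply_diagonal]
        have : ¬ ∃ u ∈ L, u.length = ((A.sState w : Fin (l+2)) : ℕ)
            ∧ e (encStr a0 l u) = i := by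
          rintro ⟨u, huL, hulen, -⟩
          have := hl u huL
          omega
        rw [if_neg this, zero_mul]
        rfl
      rw [QFAC.probAcc, hMP, norm_zero]
      simp

end
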